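/- Fix ε ∈ (0,1) and δ > 0, and for each n ≥ 2 set r_n = ⌈n^ε⌉ and d_n = ⌈δ · log₂ n⌉ (assuming n is large enough that r_n ≤ n/2). Let L*_n denote the infimum of E[ℓ(c(X^n))] over all adaptive (r_n,d_n,n)-locally decodable source codes c. Then there exist absolute constants C1, C2 > 0 (not depending on ε or δ) such that for all sufficiently large n: C1 · (2^{(1−ε)/δ} − 1) ≤ L*_n / (δ · n^ε · log₂ n) ≤ C2 · 2^{1/δ}. -/

import Mathlib

open Filter MeasureTheory

/-- A binary decision tree: internal nodes probe a (1-indexed) position of the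
codeword, leaves output a bit. -/
inductive DTree : Type
  | leaf (b : Bool) : DTree
  | node (pos : ℕ) (lo hi : DTree) : DTree

namespace DTree

/-- Depth of a decision tree. -/
def depth : DTree → ℕ
  | leaf _ => 0
  | node _ l h => 1 + max l.depth h.depth

/-- All probed positions lie in `{1, …, ℓ}`. -/
def boundedBy (ℓ : ℕ) : DTree → Prop
  | leaf _ => True
  | node p l h => 1 ≤ p ∧ p ≤ ℓ ∧ l.boundedBy ℓ ∧ h.boundedBy ℓ

/-- Evaluate the tree on a codeword `w` (positions are 1-indexed). -/
def eval (w : List Bool) : DTree → Bool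
  | leaf b => b
  | node p l h => if w.getD (p - 1) false then h.eval w else l.eval w

end DTree

/-- `x : Fin n → Bool` has exactly `r` ones. -/
def Sparse (n r : ℕ) (x : Fin n → Bool) : Prop :=
  (Finset.univ.filter fun i => x i = true).card = r

instance (n r : ℕ) : DecidablePred (Sparse n r) := fun _ => Nat.decEq _ r

/-- The type of `r`-sparse binary vectors of length `n`. -/
abbrev SparseVec (n r : ℕ) := {x : Fin n → Bool // Sparse n r x}

/-- An adaptive `(r,d,n)`-locally decodable source code. -/
structure AdaptiveLDC (r d n : ℕ) where
  enc : SparseVec n r → List Bool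
  enc_inj : Function.Injective enc
  tree : Fin n → ℕ → DTree
  depth_le : ∀ j ℓ, (tree j ℓ).depth ≤ d
  bounded : ∀ j ℓ, (tree j ℓ).boundedBy ℓ
  correct : ∀ x (j : Fin n), (tree j (enc x).length).eval (enc x) = x.1 j

/-- Expected codeword length under the uniform distribution on `r`-sparse vectors. -/
noncomputable def expLenA {r d n : ℕ} (c : AdaptiveLDC r d n) : ℝ :=
  (∑ x : SparseVec n r, ((c.enc x).length : ℝ)) / (n.choose r : ℝ)

namespace DTree

/-- The set of (0-indexed) positions probed when evaluating on `w`. -/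
def probes (w : List Bool) : DTree → Finset ℕ
  | leaf _ => ∅
  | node p l h =>
    insert (p - 1) (if w.getD (p - 1) false then probes w h else probes w l)

lemma card_probes_le (w : List Bool) (T : DTree) : (T.probes w).card ≤ T.depth := by
  induction T with
  | leaf b => simp [probes, depth]
  | node p l h ihl ihh =>
    rw [probes, depth]
    refine (Finset.card_insert_le _ _).trans ?_
    have hb : (if w.getD (p - 1) false then probes w h else probes w l).card
        ≤ max l.depth h.depth := by
      split
      · exact ihh.trans (le_max_right _ _)
      · exact ihl.trans (le_max_left _ _)
    omega

lemma probes_lt (w : List Bool) {ℓ : ℕ} (T : DTree) (hT : T.boundedBy ℓ) :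
    ∀ q ∈ T.probes w, q < ℓ := by
  induction T with
  | leaf b => simp [probes]
  | node p l h ihl ihh =>
    obtain ⟨h1, h2, hbl, hbh⟩ := hT
    intro q hq
    rw [probes, Finset.mem_insert] at hq
    rcases hq with rfl | hq
    · omega
    · split at hq
      · exact ihh hbh q hq
      · exact ihl hbl q hq

/-- Evaluate a tree using only a partial assignment (set of position/value pairs). -/
def recover (σ : Finset (ℕ × Bool)) : DTree → Option Bool
  | leaf b => some b
  | node p l h =>
    if (p - 1, true) ∈ σ then recover σ h
    else if (p - 1, false) ∈ σ then recover σ l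
    else none

lemma recover_eq_eval {w : List Bool} {σ : Finset (ℕ × Bool)}
    (hcons : ∀ qb ∈ σ, w.getD qb.1 false = qb.2) (T : DTree)
    (hsub : ∀ q ∈ T.probes w, (q, w.getD q false) ∈ σ) :
    recover σ T = some (T.eval w) := by
  induction T with
  | leaf b => rfl
  | node p l h ihl ihh =>
    have hq : (p - 1, w.getD (p - 1) false) ∈ σ := by
      apply hsub
      rw [probes]
      exact Finset.mem_insert_self _ _
    have hsub' : ∀ q ∈ (if w.getD (p - 1) false then h.probes w else l.probes w),
        (q, w.getD q false) ∈ σ := by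
      intro q hqq
      apply hsub
      rw [probes]
      exact Finset.mem_insert_of_mem hqq
    cases hb : w.getD (p - 1) false with
    | true =>
      rw [hb] at hq hsub'
      rw [if_pos rfl] at hsub'
      rw [recover, if_pos hq, eval, hb, if_pos rfl]
      exact ihh hsub'
    | false =>
      have hnt : (p - 1, true) ∉ σ := by
        intro hmem
        have := hcons _ hmem
        simp only at this
        rw [hb] at this; exact Bool.false_ne_true this
      rw [hb] at hq hsub'
      rw [if_neg (Bool.false_ne_true)] at hsub'
      rw [recover, if_neg hnt, if_pos hq, eval, hb, if_neg (Bool.false_ne_true)]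
      exact ihl hsub'

lemma recover_sound {w : List Bool} {σ : Finset (ℕ × Bool)}
    (hcons : ∀ qb ∈ σ, w.getD qb.1 false = qb.2) (T : DTree) {b : Bool}
    (h : recover σ T = some b) : T.eval w = b := by
  induction T with
  | leaf b' => rw [recover] at h; rw [eval]; exact (Option.some_inj.mp h)
  | node p l h' ihl ihh =>
    rw [recover] at h
    by_cases h1 : (p - 1, true) ∈ σ
    · rw [if_pos h1] at h
      have hw : w.getD (p - 1) false = true := hcons _ h1
      rw [eval, hw, if_pos rfl]
      exact ihh h
    · rw [if_neg h1] at h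
      by_cases h2 : (p - 1, false) ∈ σ
      · rw [if_pos h2] at h
        have hw : w.getD (p - 1) false = false := hcons _ h2
        rw [eval, hw, if_neg (Bool.false_ne_true)]
        exact ihl h
      · rw [if_neg h2] at h; exact absurd h (by simp)

end DTree
open Finset in
lemma PSS.bool_eq_of_iff {a b : Bool} (h : a = true ↔ b = true) : a = b := by
  cases a <;> cases b <;> simp_all

namespace PSS
open Finset

variable {r d n : ℕ}

def supp (x : SparseVec n r) : Finset (Fin n) :=
  Finset.univ.filter fun j => x.1 j = true

lemma card_supp (x : SparseVec n r) : (supp x).card = r := x.2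

lemma mem_supp {x : SparseVec n r} {j : Fin n} : j ∈ supp x ↔ x.1 j = true := by
  simp [supp]

def cert (c : AdaptiveLDC r d n) (x : SparseVec n r) : Finset (ℕ × Bool) :=
  (supp x).biUnion fun j =>
    ((c.tree j (c.enc x).length).probes (c.enc x)).image
      fun q => (q, (c.enc x).getD q false)

lemma cert_cons (c : AdaptiveLDC r d n) (x : SparseVec n r) :
    ∀ qb ∈ cert c x, (c.enc x).getD qb.1 false = qb.2 := by
  intro qb hqb
  simp only [cert, mem_biUnion, mem_image] at hqb
  obtain ⟨j, _, q, _, rfl⟩ := hqb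
  rfl

lemma card_cert_le (c : AdaptiveLDC r d n) (x : SparseVec n r) :
    (cert c x).card ≤ r * d := by
  refine (Finset.card_biUnion_le).trans ?_
  calc ∑ j ∈ supp x,
        (((c.tree j (c.enc x).length).probes (c.enc x)).image
          fun q => (q, (c.enc x).getD q false)).card
      ≤ ∑ _j ∈ supp x, d := by
        refine Finset.sum_le_sum fun j _ => ?_
        exact (Finset.card_image_le).trans
          ((DTree.card_probes_le _ _).trans (c.depth_le _ _))
    _ = r * d := by rw [Finset.sum_const, card_supp, smul_eq_mul]

lemma cert_subset (c : AdaptiveLDC r d n) (x : SparseVec n r) :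
    cert c x ⊆ (Finset.range (c.enc x).length) ×ˢ (Finset.univ : Finset Bool) := by
  intro qb hqb
  simp only [cert, mem_biUnion, mem_image] at hqb
  obtain ⟨j, hj, q, hq, rfl⟩ := hqb
  simp only [mem_product, mem_range, mem_univ, and_true]
  exact DTree.probes_lt _ _ (c.bounded j _) q hq

lemma recover_iff (c : AdaptiveLDC r d n) (x : SparseVec n r) (j : Fin n) :
    x.1 j = true ↔
      DTree.recover (cert c x) (c.tree j (c.enc x).length) = some true := by
  constructor
  · intro hx
    have h := DTree.recover_eq_eval (cert_cons c x) (c.tree j (c.enc x).length)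
      (fun q hq => by
        simp only [cert, mem_biUnion]
        exact ⟨j, mem_supp.mpr hx, Finset.mem_image_of_mem _ hq⟩)
    rw [h, c.correct, hx]
  · intro hrec
    have := DTree.recover_sound (cert_cons c x) _ hrec
    rw [c.correct] at this
    exact this

lemma cert_injOn (c : AdaptiveLDC r d n) (x y : SparseVec n r)
    (hlen : (c.enc x).length = (c.enc y).length) (hcert : cert c x = cert c y) :
    x = y := by
  apply Subtype.ext; funext j
  have hx := recover_iff c x j
  have hy := recover_iff c y j
  rw [hcert, hlen] at hx
  exact bool_eq_of_iff (hx.trans hy.symm)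

lemma card_powerset_filter_card_le {α : Type*} [DecidableEq α] (s : Finset α) (k : ℕ) :
    ((s.powerset).filter fun t => t.card ≤ k).card
      = ∑ i ∈ Finset.range (k+1), s.card.choose i := by
  have hset : (s.powerset.filter fun t => t.card ≤ k) =
      (Finset.range (k+1)).biUnion fun i => s.powersetCard i := by
    ext t
    simp only [mem_filter, mem_powerset, mem_biUnion, mem_range, mem_powersetCard]
    constructor
    · rintro ⟨h1, h2⟩; exact ⟨t.card, by omega, h1, rfl⟩
    · rintro ⟨i, hi, h1, rfl⟩; exact ⟨h1, by omega⟩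
  rw [hset, Finset.card_biUnion]
  · exact Finset.sum_congr rfl fun i _ => Finset.card_powersetCard i s
  · intro i _ i' _ hne
    simp only [Function.onFun]
    rw [Finset.disjoint_left]
    intro t ht ht'
    rw [mem_powersetCard] at ht ht'
    exact hne (ht.2 ▸ ht'.2)

/-- The length-`ℓ` class of a code. -/
def cls (c : AdaptiveLDC r d n) (ℓ : ℕ) : Finset (SparseVec n r) :=
  Finset.univ.filter fun x => (c.enc x).length = ℓ

lemma card_cls_le_cert (c : AdaptiveLDC r d n) (ℓ : ℕ) :
    (cls c ℓ).card ≤ ∑ i ∈ Finset.range (r*d+1), (2*ℓ).choose i := by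
  have h := Finset.card_le_card_of_injOn (cert c)
    (s := cls c ℓ)
    (t := ((Finset.range ℓ ×ˢ (Finset.univ : Finset Bool)).powerset.filter
      fun t => t.card ≤ r*d))
    (fun x hx => by
      simp only [Finset.mem_coe, cls, mem_filter, mem_univ, true_and] at hx
      simp only [Finset.mem_coe, mem_filter, mem_powerset]
      refine ⟨?_, card_cert_le c x⟩
      rw [← hx]
      exact cert_subset c x)
    (fun x hx y hy hxy => by
      simp only [cls, Finset.coe_filter, Set.mem_setOf_eq] at hx hy
      exact cert_injOn c x y (hx.2.trans hy.2.symm) hxy)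
  rw [card_powerset_filter_card_le] at h
  have hcard : (Finset.range ℓ ×ˢ (Finset.univ : Finset Bool)).card = 2*ℓ := by
    rw [Finset.card_product, Finset.card_range, Finset.card_univ]
    simp [mul_comm]
  rw [hcard] at h
  exact h

lemma card_cls_le_pow (c : AdaptiveLDC r d n) (ℓ : ℕ) :
    (cls c ℓ).card ≤ 2^ℓ := by
  have h := Finset.card_le_card_of_injOn
    (fun x : SparseVec n r => (fun i : Fin ℓ => (c.enc x).getD i false))
    (s := cls c ℓ) (t := Finset.univ)
    (fun x _ => Finset.mem_univ _)
    (fun x hx y hy hxy => by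
      simp only [cls, Finset.coe_filter, Set.mem_setOf_eq] at hx hy
      apply c.enc_inj
      apply List.ext_getElem (hx.2.trans hy.2.symm)
      intro i h1 h2
      have hi : i < ℓ := hx.2 ▸ h1
      have := congrFun hxy ⟨i, hi⟩
      simpa only [List.getD_eq_getElem _ _ h1, List.getD_eq_getElem _ _ h2] using this)
  rw [Finset.card_univ] at h
  simpa using h

lemma card_sparseVec : Fintype.card (SparseVec n r) = n.choose r := by
  rw [Fintype.card_subtype]
  have : ((Finset.univ : Finset (Fin n)).powersetCard r).card = n.choose r := by
    rw [Finset.card_powersetCard, Finset.card_univ, Fintype.card_fin]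
  rw [← this]
  apply Finset.card_bij (fun x _ => Finset.univ.filter fun i => x i = true)
  · intro x hx
    simp only [Finset.mem_filter, Finset.mem_univ, true_and] at hx
    rw [Finset.mem_powersetCard]
    exact ⟨Finset.filter_subset _ _ |>.trans (Finset.subset_univ _), hx⟩
  · intro x hx y hy hxy
    funext i
    apply bool_eq_of_iff
    constructor
    · intro h
      have : i ∈ Finset.univ.filter fun j => x j = true := by
        simp [h]
      rw [hxy] at this
      simpa using this
    · intro h
      have : i ∈ Finset.univ.filter fun j => y j = true := by
        simp [h]
      rw [← hxy] at this
      simpa using this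
  · intro S hS
    rw [Finset.mem_powersetCard] at hS
    refine ⟨fun i => decide (i ∈ S), ?_, ?_⟩
    · simp only [Finset.mem_filter, Finset.mem_univ, true_and, Sparse]
      have : (Finset.univ.filter fun i => decide (i ∈ S) = true) = S := by
        ext i; simp
      exact (Finset.mem_filter (p := Sparse n r)).mpr ⟨Finset.mem_univ _, by show Sparse n r _; unfold Sparse; rw [this]; exact hS.2⟩
    · ext i; simp

lemma sum_len_lb (c : AdaptiveLDC r d n) (L : ℕ) (cap : ℕ → ℕ)
    (hcap : ∀ ℓ, (cls c ℓ).card ≤ cap ℓ)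
    (hsum : 2 * ∑ ℓ ∈ Finset.range L, cap ℓ ≤ n.choose r) :
    n.choose r * L ≤ 2 * ∑ x : SparseVec n r, (c.enc x).length := by
  classical
  set A := Finset.univ.filter fun x : SparseVec n r => (c.enc x).length < L with hA
  set B := Finset.univ.filter fun x : SparseVec n r => ¬ (c.enc x).length < L with hB
  have hAB : A.card + B.card = n.choose r := by
    rw [hA, hB, Finset.card_filter_add_card_filter_not, Finset.card_univ,
      card_sparseVec]
  have hAcard : A.card ≤ ∑ ℓ ∈ Finset.range L, cap ℓ := by
    have hsub : A ⊆ (Finset.range L).biUnion fun ℓ => cls c ℓ := by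
      intro x hx
      simp only [hA, mem_filter, mem_univ, true_and] at hx
      simp only [mem_biUnion, mem_range, cls, mem_filter, mem_univ, true_and]
      exact ⟨_, hx, rfl⟩
    exact ((Finset.card_le_card hsub).trans Finset.card_biUnion_le).trans
      (Finset.sum_le_sum fun ℓ _ => hcap ℓ)
  have hsumB : B.card * L ≤ ∑ x : SparseVec n r, (c.enc x).length :=
    calc B.card * L = ∑ _x ∈ B, L := by rw [Finset.sum_const, smul_eq_mul]
    _ ≤ ∑ x ∈ B, (c.enc x).length := Finset.sum_le_sum (fun x hx => by
        simp only [hB, mem_filter] at hx; omega)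
    _ ≤ ∑ x : SparseVec n r, (c.enc x).length :=
        Finset.sum_le_sum_of_subset (Finset.subset_univ B)
  have h2B : n.choose r ≤ 2 * B.card := by omega
  calc n.choose r * L ≤ (2 * B.card) * L := Nat.mul_le_mul_right L h2B
    _ = 2 * (B.card * L) := by ring
    _ ≤ 2 * ∑ x : SparseVec n r, (c.enc x).length := Nat.mul_le_mul_left 2 hsumB

end PSS
namespace PSS
open Finset

variable {n r t m : ℕ}

def hitSet (h : Fin n → Fin t → Fin m) (S : Finset (Fin n)) : Finset (Fin m) :=
  S.biUnion fun s => Finset.image (h s) Finset.univ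

def GoodF (S : Finset (Fin n)) (h : Fin n → Fin t → Fin m) : Prop :=
  ∀ j ∉ S, ∃ i, h j i ∉ hitSet h S

instance (S : Finset (Fin n)) : DecidablePred (GoodF (t := t) (m := m) S) := fun _ => by
  unfold GoodF; infer_instance

lemma card_hitSet_le (h : Fin n → Fin t → Fin m) (S : Finset (Fin n)) :
    (hitSet h S).card ≤ S.card * t := by
  refine Finset.card_biUnion_le.trans ?_
  calc ∑ s ∈ S, (Finset.image (h s) Finset.univ).card
      ≤ ∑ _s ∈ S, t := Finset.sum_le_sum fun s _ =>
        (Finset.card_image_le).trans (by simp)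
    _ = S.card * t := by rw [Finset.sum_const, smul_eq_mul]

lemma hitSet_update {h : Fin n → Fin t → Fin m} {S : Finset (Fin n)} {j : Fin n}
    (hj : j ∉ S) (u : Fin t → Fin m) :
    hitSet (Function.update h j u) S = hitSet h S := by
  unfold hitSet
  apply Finset.biUnion_congr rfl
  intro s hs
  rw [Function.update_of_ne (by rintro rfl; exact hj hs) u h]

lemma step1 (S : Finset (Fin n)) (hS : S.card = r) {j : Fin n} (hj : j ∉ S)
    (hrt : 0 < r * t) :
    (Finset.univ.filter fun h : Fin n → Fin t → Fin m =>
      ∀ i, h j i ∈ hitSet h S).card * m ^ t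
      ≤ Fintype.card (Fin n → Fin t → Fin m) * (r * t) ^ t := by
  classical
  have key := Finset.card_le_card_of_injOn
    (s := (Finset.univ.filter fun h : Fin n → Fin t → Fin m =>
      ∀ i, h j i ∈ hitSet h S) ×ˢ (Finset.univ : Finset (Fin t → Fin m)))
    (t := (Finset.univ : Finset (Fin n → Fin t → Fin m)) ×ˢ
      (Finset.univ : Finset (Fin t → Fin (r * t))))
    (fun p => (Function.update p.1 j p.2,
      fun i => (⟨min (((hitSet p.1 S).sort (· ≤ ·)).idxOf (p.1 j i)) (r * t - 1),
        by omega⟩ : Fin (r * t))))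
    (fun p _ => Finset.mem_product.mpr ⟨Finset.mem_univ _, Finset.mem_univ _⟩)
    ?_
  · rw [Finset.card_product, Finset.card_product, Finset.card_univ, Finset.card_univ,
      Finset.card_univ] at key
    simp only [Fintype.card_fun, Fintype.card_fin] at key ⊢
    exact key
  · rintro ⟨h₁, u₁⟩ hp₁ ⟨h₂, u₂⟩ hp₂ heq
    simp only [Finset.coe_product, Set.mem_prod, Finset.mem_coe, Finset.mem_filter,
      Finset.mem_univ, true_and] at hp₁ hp₂
    simp only [Prod.mk.injEq] at heq
    obtain ⟨hH, hv⟩ := heq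
    have hhit : hitSet h₁ S = hitSet h₂ S := by
      have e1 := hitSet_update (h := h₁) hj u₁
      have e2 := hitSet_update (h := h₂) hj u₂
      rw [← e1, ← e2, hH]
    -- recover the j-th row
    have hrow : ∀ i, h₁ j i = h₂ j i := by
      intro i
      have hmem₁ : h₁ j i ∈ (hitSet h₁ S).sort (· ≤ ·) :=
        (Finset.mem_sort _).mpr (hp₁.1 i)
      have hmem₂ : h₂ j i ∈ (hitSet h₂ S).sort (· ≤ ·) :=
        (Finset.mem_sort _).mpr (hp₂.1 i)
      have hlt₁ : (((hitSet h₁ S).sort (· ≤ ·)).idxOf (h₁ j i)) <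
          ((hitSet h₁ S).sort (· ≤ ·)).length := List.idxOf_lt_length_iff.mpr hmem₁
      have hlt₂ : (((hitSet h₂ S).sort (· ≤ ·)).idxOf (h₂ j i)) <
          ((hitSet h₂ S).sort (· ≤ ·)).length := List.idxOf_lt_length_iff.mpr hmem₂
      have hlen₁ : ((hitSet h₁ S).sort (· ≤ ·)).length ≤ r * t := by
        rw [Finset.length_sort]
        exact (card_hitSet_le h₁ S).trans (by rw [hS])
      have hlen₂ : ((hitSet h₂ S).sort (· ≤ ·)).length ≤ r * t := by
        rw [Finset.length_sort]
        exact (card_hitSet_le h₂ S).trans (by rw [hS])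
      have hv' := congrFun hv i
      have hidx : (((hitSet h₁ S).sort (· ≤ ·)).idxOf (h₁ j i))
          = (((hitSet h₂ S).sort (· ≤ ·)).idxOf (h₂ j i)) := by
        have := congrArg Fin.val hv'
        simp only at this
        omega
      rw [← hhit] at hmem₂ hidx
      exact (List.idxOf_inj hmem₁).mp hidx
    have hu : u₁ = u₂ := by
      have := congrFun hH j
      rwa [Function.update_self, Function.update_self] at this
    have hfun : h₁ = h₂ := by
      funext k i
      by_cases hk : k = j
      · subst hk; exact hrow i
      · have := congrFun (congrFun hH k) i
        rwa [Function.update_of_ne hk, Function.update_of_ne hk] at this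
    rw [hfun, hu]
lemma step2 (S : Finset (Fin n)) (hS : S.card = r) (hrt : 0 < r * t) :
    (Finset.univ.filter fun h : Fin n → Fin t → Fin m => ¬ GoodF S h).card * m ^ t
      ≤ n * (Fintype.card (Fin n → Fin t → Fin m) * (r * t) ^ t) := by
  classical
  have hsub : (Finset.univ.filter fun h : Fin n → Fin t → Fin m => ¬ GoodF S h)
      ⊆ Finset.univ.biUnion fun j : Fin n =>
          if j ∈ S then ∅ else
            Finset.univ.filter fun h : Fin n → Fin t → Fin m =>
              ∀ i, h j i ∈ hitSet h S := by
    intro h hh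
    replace hh : ¬ GoodF S h := (Finset.mem_filter.mp hh).2
    unfold GoodF at hh
    push_neg at hh
    obtain ⟨j, hj, hall⟩ := hh
    simp only [Finset.mem_biUnion, Finset.mem_univ, true_and]
    refine ⟨j, ?_⟩
    rw [if_neg hj]
    simp only [Finset.mem_filter, Finset.mem_univ, true_and]
    exact hall
  have hcard := (Finset.card_le_card hsub).trans Finset.card_biUnion_le
  have hmul : (Finset.univ.filter fun h : Fin n → Fin t → Fin m => ¬ GoodF S h).card * m ^ t
      ≤ (∑ j : Fin n, (if j ∈ S then (∅ : Finset (Fin n → Fin t → Fin m)) else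
          Finset.univ.filter fun h => ∀ i, h j i ∈ hitSet h S).card) * m ^ t :=
    Nat.mul_le_mul_right _ hcard
  refine hmul.trans ?_
  rw [Finset.sum_mul]
  have hbound : ∀ j : Fin n, (if j ∈ S then (∅ : Finset (Fin n → Fin t → Fin m)) else
      Finset.univ.filter fun h => ∀ i, h j i ∈ hitSet h S).card * m ^ t
      ≤ Fintype.card (Fin n → Fin t → Fin m) * (r * t) ^ t := by
    intro j
    by_cases hj : j ∈ S
    · rw [if_pos hj]; simp
    · rw [if_neg hj]
      exact step1 S hS hj hrt
  calc ∑ j : Fin n, (if j ∈ S then (∅ : Finset (Fin n → Fin t → Fin m)) else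
        Finset.univ.filter fun h => ∀ i, h j i ∈ hitSet h S).card * m ^ t
      ≤ ∑ _j : Fin n, Fintype.card (Fin n → Fin t → Fin m) * (r * t) ^ t :=
        Finset.sum_le_sum fun j _ => hbound j
    _ = n * (Fintype.card (Fin n → Fin t → Fin m) * (r * t) ^ t) := by
        rw [Finset.sum_const, Finset.card_univ, Fintype.card_fin, smul_eq_mul]

lemma badF_le (S : Finset (Fin n)) (hS : S.card = r) (hrt : 0 < r * t) (hm : 0 < m)
    (Hm2 : 2 * (n * (r * t) ^ t) ≤ m ^ t) :
    2 * (Finset.univ.filter fun h : Fin n → Fin t → Fin m => ¬ GoodF S h).card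
      ≤ Fintype.card (Fin n → Fin t → Fin m) := by
  have h2 := step2 (m := m) S hS hrt
  have hmt : 0 < m ^ t := Nat.pow_pos hm
  have key : (2 * (Finset.univ.filter fun h : Fin n → Fin t → Fin m =>
      ¬ GoodF S h).card) * m ^ t ≤ Fintype.card (Fin n → Fin t → Fin m) * m ^ t := by
    calc (2 * (Finset.univ.filter fun h : Fin n → Fin t → Fin m => ¬ GoodF S h).card) * m ^ t
        = 2 * ((Finset.univ.filter fun h : Fin n → Fin t → Fin m => ¬ GoodF S h).card * m ^ t) := by ring
      _ ≤ 2 * (n * (Fintype.card (Fin n → Fin t → Fin m) * (r * t) ^ t)) :=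
          Nat.mul_le_mul_left 2 h2
      _ = (2 * (n * (r * t) ^ t)) * Fintype.card (Fin n → Fin t → Fin m) := by ring
      _ ≤ m ^ t * Fintype.card (Fin n → Fin t → Fin m) :=
          Nat.mul_le_mul_right _ Hm2
      _ = Fintype.card (Fin n → Fin t → Fin m) * m ^ t := by ring
  exact Nat.le_of_mul_le_mul_right key hmt

lemma exists_good_family (M : ℕ) (hm : 0 < m) (hrt : 0 < r * t)
    (Hm2 : 2 * (n * (r * t) ^ t) ≤ m ^ t) (hC : n.choose r < 2 ^ M) :
    ∃ g : Fin M → Fin n → Fin t → Fin m,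
      ∀ S : Finset (Fin n), S.card = r → ∃ σ, GoodF S (g σ) := by
  classical
  set γ := Fin n → Fin t → Fin m with hγ
  set badTotal : Finset (Fin M → γ) := Finset.univ.filter fun g =>
    ∃ S : Finset (Fin n), S.card = r ∧ ∀ σ, ¬ GoodF S (g σ) with hbt
  have hsub : badTotal ⊆ (Finset.univ.powersetCard r).biUnion fun S =>
      Fintype.piFinset fun _ : Fin M => Finset.univ.filter fun h : γ => ¬ GoodF S h := by
    intro g hg
    simp only [hbt, Finset.mem_filter, Finset.mem_univ, true_and] at hg
    obtain ⟨S, hScard, hSbad⟩ := hg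
    simp only [Finset.mem_biUnion]
    refine ⟨S, by rw [Finset.mem_powersetCard]; exact ⟨Finset.subset_univ _, hScard⟩, ?_⟩
    rw [Fintype.mem_piFinset]
    intro σ
    simp only [Finset.mem_filter, Finset.mem_univ, true_and]
    exact hSbad σ
  have hCγpos : 0 < Fintype.card γ := by
    show 0 < Fintype.card (Fin n → Fin t → Fin m)
    exact Fintype.card_pos_iff.mpr ⟨fun _ _ => ⟨0, hm⟩⟩
  have hpiCard : ∀ S : Finset (Fin n),
      (Fintype.piFinset fun _ : Fin M => Finset.univ.filter fun h : γ =>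
        ¬ GoodF S h).card
      = ((Finset.univ.filter fun h : γ => ¬ GoodF S h).card) ^ M := by
    intro S
    rw [Fintype.card_piFinset]
    rw [Finset.prod_const, Finset.card_univ, Fintype.card_fin]
  have hterm : ∀ S : Finset (Fin n), S.card = r →
      ((Finset.univ.filter fun h : γ => ¬ GoodF S h).card) ^ M * 2 ^ M
        ≤ (Fintype.card γ) ^ M := by
    intro S hS
    rw [← mul_pow]
    apply Nat.pow_le_pow_left
    rw [mul_comm]
    exact badF_le S hS hrt hm Hm2
  have hcardbt : badTotal.card * 2 ^ M < 2 ^ M * (Fintype.card γ) ^ M := by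
    have h1 : badTotal.card ≤ ∑ S ∈ Finset.univ.powersetCard r,
        ((Finset.univ.filter fun h : γ => ¬ GoodF S h).card) ^ M := by
      refine (Finset.card_le_card hsub).trans ?_
      refine Finset.card_biUnion_le.trans ?_
      exact Finset.sum_le_sum fun S _ => le_of_eq (hpiCard S)
    calc badTotal.card * 2 ^ M
        ≤ (∑ S ∈ Finset.univ.powersetCard r,
            ((Finset.univ.filter fun h : γ => ¬ GoodF S h).card) ^ M) * 2 ^ M :=
          Nat.mul_le_mul_right _ h1
      _ = ∑ S ∈ Finset.univ.powersetCard r,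
            ((Finset.univ.filter fun h : γ => ¬ GoodF S h).card) ^ M * 2 ^ M := by
          rw [Finset.sum_mul]
      _ ≤ ∑ _S ∈ Finset.univ.powersetCard r, (Fintype.card γ) ^ M :=
          Finset.sum_le_sum fun S hS => hterm S (by
            rw [Finset.mem_powersetCard] at hS; exact hS.2)
      _ = n.choose r * (Fintype.card γ) ^ M := by
          rw [Finset.sum_const, Finset.card_powersetCard, Finset.card_univ,
            Fintype.card_fin, smul_eq_mul]
      _ < 2 ^ M * (Fintype.card γ) ^ M := by
          apply Nat.mul_lt_mul_of_lt_of_le hC (le_refl _)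
          exact Nat.pow_pos hCγpos
  have hlt : badTotal.card < (Fintype.card γ) ^ M := by
    have := hcardbt
    rw [mul_comm (2^M) _] at this
    exact Nat.lt_of_mul_lt_mul_right this
  have hne : badTotal ≠ Finset.univ := by
    intro he
    rw [he, Finset.card_univ, Fintype.card_fun, Fintype.card_fin] at hlt
    exact lt_irrefl _ hlt
  have : ∃ g : Fin M → γ, g ∉ badTotal := by
    by_contra hall
    push_neg at hall
    exact hne (Finset.eq_univ_iff_forall.mpr hall)
  obtain ⟨g, hg⟩ := this
  refine ⟨g, fun S hS => ?_⟩
  simp only [hbt, Finset.mem_filter, Finset.mem_univ, true_and, not_exists, not_and,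
    not_forall] at hg
  obtain ⟨σ, hσ⟩ := hg S hS
  exact ⟨σ, not_not.mp hσ⟩

def chain : List ℕ → DTree
  | [] => .leaf true
  | p :: ps => .node p (.leaf false) (chain ps)

lemma chain_depth (l : List ℕ) : (chain l).depth = l.length := by
  induction l with
  | nil => rfl
  | cons p ps ih =>
    simp only [chain, DTree.depth, ih, List.length_cons, Nat.zero_max]
    omega

lemma chain_bounded {ℓ : ℕ} (l : List ℕ) (h : ∀ p ∈ l, 1 ≤ p ∧ p ≤ ℓ) :
    (chain l).boundedBy ℓ := by
  induction l with
  | nil => trivial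
  | cons p ps ih =>
    obtain ⟨h1, h2⟩ := h p List.mem_cons_self
    exact ⟨h1, h2, trivial, ih fun q hq => h q (List.mem_cons_of_mem p hq)⟩

lemma chain_eval_true (w : List Bool) (l : List ℕ)
    (h : ∀ p ∈ l, w.getD (p - 1) false = true) : (chain l).eval w = true := by
  induction l with
  | nil => rfl
  | cons p ps ih =>
    rw [chain, DTree.eval, h p List.mem_cons_self, if_pos rfl]
    exact ih fun q hq => h q (List.mem_cons_of_mem p hq)

lemma chain_eval_false (w : List Bool) (l : List ℕ)
    (h : ∃ p ∈ l, w.getD (p - 1) false = false) : (chain l).eval w = false := by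
  induction l with
  | nil => simp at h
  | cons p ps ih =>
    obtain ⟨q, hq, hqf⟩ := h
    rw [chain, DTree.eval]
    rcases List.mem_cons.mp hq with rfl | hq'
    · rw [hqf, if_neg Bool.false_ne_true]
      rfl
    · cases hb : w.getD (p - 1) false with
      | false => rw [if_neg Bool.false_ne_true]; rfl
      | true => rw [if_pos rfl]; exact ih ⟨q, hq', hqf⟩

lemma exists_code (n r d m M : ℕ) (hm : 0 < m) (hM : 0 < M) (hrd : 0 < r * d)
    (Hm2 : 2 * (n * (r * d) ^ d) ≤ m ^ d) (hC : n.choose r < 2 ^ M) :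
    ∃ c : AdaptiveLDC r d n, ∀ x, (c.enc x).length ≤ m + M := by
  classical
  obtain ⟨g, hg⟩ := exists_good_family (t := d) (m := m) M hm hrd Hm2 hC
  have hseed : ∀ x : SparseVec n r, ∃ σ : Fin M, GoodF (supp x) (g σ) :=
    fun x => hg _ (card_supp x)
  choose seed hseedGood using hseed
  set encf : SparseVec n r → List Bool := fun x =>
    (List.ofFn fun cf : Fin m => decide (cf ∈ hitSet (g (seed x)) (supp x)))
      ++ List.replicate (seed x).val false with hencf
  have hlen : ∀ x, (encf x).length = m + (seed x).val := by
    intro x; simp [hencf]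
  set treef : Fin n → ℕ → DTree := fun j ℓ =>
    if hℓ : m ≤ ℓ ∧ ℓ - m < M then
      chain (List.ofFn fun i : Fin d => ((g ⟨ℓ - m, hℓ.2⟩ j i : Fin m) : ℕ) + 1)
    else .leaf false with htreef
  have hgetD : ∀ (x : SparseVec n r) (cf : Fin m),
      (encf x).getD cf.val false = decide (cf ∈ hitSet (g (seed x)) (supp x)) := by
    intro x cf
    rw [hencf]
    simp only
    rw [List.getD_append _ _ _ _ (by simp [cf.isLt])]
    rw [List.getD_eq_getElem _ _ (by simp [cf.isLt])]
    rw [List.getElem_ofFn]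
  have hcorrect : ∀ (x : SparseVec n r) (j : Fin n),
      (treef j (encf x).length).eval (encf x) = x.1 j := by
    intro x j
    have hℓ : m ≤ (encf x).length ∧ (encf x).length - m < M := by
      rw [hlen]
      constructor
      · omega
      · simpa using (seed x).isLt
    rw [htreef]
    simp only
    rw [dif_pos hℓ]
    have hfin : (⟨(encf x).length - m, hℓ.2⟩ : Fin M) = seed x := by
      apply Fin.ext
      simp only
      rw [hlen]
      omega
    rw [hfin]
    by_cases hxj : x.1 j = true
    · rw [hxj]
      apply chain_eval_true
      intro p hp
      rw [List.mem_ofFn] at hp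
      obtain ⟨i, rfl⟩ := hp
      rw [Nat.add_sub_cancel]
      rw [hgetD]
      rw [decide_eq_true_eq]
      exact Finset.mem_biUnion.mpr ⟨j, mem_supp.mpr hxj,
        Finset.mem_image.mpr ⟨i, Finset.mem_univ i, rfl⟩⟩
    · have hxj' : x.1 j = false := by
        cases hb : x.1 j
        · rfl
        · exact absurd hb hxj
      rw [hxj']
      have hjns : j ∉ supp x := fun hmem => hxj (mem_supp.mp hmem)
      obtain ⟨i, hi⟩ := hseedGood x j hjns
      apply chain_eval_false
      refine ⟨((g (seed x) j i : Fin m) : ℕ) + 1, ?_, ?_⟩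
      · rw [List.mem_ofFn]
        exact ⟨i, rfl⟩
      · rw [Nat.add_sub_cancel, hgetD]
        rw [decide_eq_false_iff_not]
        exact hi
  refine ⟨⟨encf, ?_, treef, ?_, ?_, hcorrect⟩, ?_⟩
  · intro x y hxy
    apply Subtype.ext; funext j
    have hx := hcorrect x j
    have hy := hcorrect y j
    rw [← hx, ← hy, hxy]
  · intro j ℓ
    rw [htreef]
    simp only
    by_cases hℓ : m ≤ ℓ ∧ ℓ - m < M
    · rw [dif_pos hℓ, chain_depth, List.length_ofFn]
    · rw [dif_neg hℓ]
      exact Nat.zero_le d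
  · intro j ℓ
    rw [htreef]
    simp only
    by_cases hℓ : m ≤ ℓ ∧ ℓ - m < M
    · rw [dif_pos hℓ]
      apply chain_bounded
      intro p hp
      rw [List.mem_ofFn] at hp
      obtain ⟨i, rfl⟩ := hp
      beta_reduce
      refine ⟨Nat.le_add_left 1 _, ?_⟩
      have h1 : ((g ⟨ℓ - m, hℓ.2⟩ j i : Fin m) : ℕ) < m := Fin.is_lt _
      have h2 : m ≤ ℓ := hℓ.1
      omega
    · rw [dif_neg hℓ]
      trivial
  · intro x
    rw [hlen]
    have := (seed x).isLt
    omega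

end PSS
namespace PSS
open Finset Real

lemma nat_sq_bound : ∀ w : ℕ, 40 ≤ w → 9 * (w + 1)^2 ≤ 2^w := by
  intro w hw
  induction w, hw using Nat.le_induction with
  | base => norm_num
  | succ w hw ih =>
    have h1 : 9 * (w + 1 + 1)^2 ≤ 2 * (9 * (w + 1)^2) := by nlinarith
    calc 9 * (w + 1 + 1)^2 ≤ 2 * (9 * (w + 1)^2) := h1
      _ ≤ 2 * 2^w := Nat.mul_le_mul_left 2 ih
      _ = 2^(w+1) := by ring

lemma sq_le_rpow {z : ℝ} (hz : 40 ≤ z) : 9 * z^2 ≤ (2:ℝ)^z := by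
  set w := ⌊z⌋₊ with hwdef
  have hw40 : 40 ≤ w := Nat.le_floor (by exact_mod_cast hz)
  have hzw : z < (w:ℝ) + 1 := Nat.lt_floor_add_one z
  have hwz : (w:ℝ) ≤ z := Nat.floor_le (by linarith)
  have h0 : (0:ℝ) ≤ z := by linarith
  have h1 : 9 * z^2 ≤ 9 * ((w:ℝ)+1)^2 := by nlinarith
  have h2 : (9 * ((w:ℝ)+1)^2) = ((9 * (w+1)^2 : ℕ) : ℝ) := by push_cast; ring
  have h3 : ((9 * (w+1)^2 : ℕ) : ℝ) ≤ ((2^w : ℕ) : ℝ) := by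
    exact_mod_cast nat_sq_bound w hw40
  have h4 : ((2^w : ℕ) : ℝ) = (2:ℝ)^(w:ℝ) := by
    rw [Real.rpow_natCast]; push_cast; ring
  have h5 : (2:ℝ)^(w:ℝ) ≤ (2:ℝ)^z :=
    Real.rpow_le_rpow_of_exponent_le (by norm_num) hwz
  linarith

lemma pow_self_le_three_pow_factorial : ∀ k : ℕ, ((k:ℝ))^k ≤ 3^k * (k.factorial : ℝ) := by
  intro k
  induction k with
  | zero => simp
  | succ k ih =>
    rcases Nat.eq_zero_or_pos k with rfl | hk
    · norm_num
    have hkR : (0:ℝ) < k := by exact_mod_cast hk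
    have key : ((k:ℝ)+1)^k ≤ 3 * (k:ℝ)^k := by
      have h1 : ((k:ℝ)+1)^k = (k:ℝ)^k * (1 + 1/k)^k := by
        rw [← mul_pow]
        congr 1
        field_simp
      have h2 : (1 + 1/(k:ℝ))^k ≤ Real.exp (1/k) ^ k := by
        apply pow_le_pow_left₀ (by positivity)
        have := Real.add_one_le_exp (1/(k:ℝ))
        linarith
      have h3 : Real.exp (1/(k:ℝ)) ^ k = Real.exp 1 := by
        rw [← Real.exp_nat_mul]
        congr 1
        field_simp
      have h4 : Real.exp 1 ≤ 3 := by
        have := Real.exp_one_lt_d9; linarith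
      have h5 : (0:ℝ) ≤ (k:ℝ)^k := by positivity
      calc ((k:ℝ)+1)^k = (k:ℝ)^k * (1 + 1/k)^k := h1
        _ ≤ (k:ℝ)^k * Real.exp 1 := by
            rw [h3] at h2
            exact mul_le_mul_of_nonneg_left h2 h5
        _ ≤ 3 * (k:ℝ)^k := by nlinarith
    have hfacpos : (0:ℝ) < (k.factorial : ℝ) := by exact_mod_cast k.factorial_pos
    calc ((k+1:ℕ):ℝ)^(k+1) = ((k:ℝ)+1)^k * ((k:ℝ)+1) := by push_cast; ring
      _ ≤ 3 * (k:ℝ)^k * ((k:ℝ)+1) := by nlinarith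
      _ ≤ 3 * (3^k * (k.factorial:ℝ)) * ((k:ℝ)+1) := by nlinarith
      _ = 3^(k+1) * ((k.factorial:ℝ) * ((k:ℝ)+1)) := by ring
      _ = 3^(k+1) * ((k+1).factorial : ℝ) := by
          rw [Nat.factorial_succ]
          push_cast; ring

lemma choose_2L_bound (mm K' : ℕ) (hmm : 1 ≤ mm) :
    (((2*(mm*K')).choose mm : ℕ) : ℝ) ≤ ((6:ℝ)*K')^mm := by
  have hdesc : (2*(mm*K')).descFactorial mm ≤ (2*(mm*K'))^mm :=
    Nat.descFactorial_le_pow _ _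
  have heq : (2*(mm*K')).descFactorial mm
      = mm.factorial * (2*(mm*K')).choose mm :=
    Nat.descFactorial_eq_factorial_mul_choose _ _
  have h1n : mm.factorial * (2*(mm*K')).choose mm ≤ (2*(mm*K'))^mm := heq ▸ hdesc
  have h1 : (mm.factorial : ℝ) * ((2*(mm*K')).choose mm : ℝ)
      ≤ ((2*((mm:ℝ)*K')))^mm := by exact_mod_cast h1n
  have h2 : ((mm:ℝ))^mm ≤ 3^mm * (mm.factorial : ℝ) :=
    pow_self_le_three_pow_factorial mm
  have hmmR : (0:ℝ) < (mm:ℝ) := by exact_mod_cast hmm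
  have hP : (0:ℝ) < ((mm:ℝ))^mm := by positivity
  have ha : (0:ℝ) ≤ ((2*(mm*K')).choose mm : ℝ) := by positivity
  have hQ : (0:ℝ) ≤ (3:ℝ)^mm := by positivity
  have key : ((2*(mm*K')).choose mm : ℝ) * ((mm:ℝ))^mm ≤ ((6:ℝ)*K')^mm * ((mm:ℝ))^mm := by
    calc ((2*(mm*K')).choose mm : ℝ) * ((mm:ℝ))^mm
        ≤ ((2*(mm*K')).choose mm : ℝ) * (3^mm * (mm.factorial : ℝ)) :=
          mul_le_mul_of_nonneg_left h2 ha
      _ = 3^mm * ((mm.factorial : ℝ) * ((2*(mm*K')).choose mm : ℝ)) := by ring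
      _ ≤ 3^mm * ((2*((mm:ℝ)*K')))^mm := mul_le_mul_of_nonneg_left h1 hQ
      _ = ((6:ℝ)*K')^mm * ((mm:ℝ))^mm := by
          rw [← mul_pow, ← mul_pow]
          congr 1
          ring
  exact le_of_mul_le_mul_right key hP

lemma choose_mono_half {N : ℕ} : ∀ {i k : ℕ}, i ≤ k → k ≤ N / 2 →
    N.choose i ≤ N.choose k := by
  intro i k hik hk
  induction k, hik using Nat.le_induction with
  | base => exact le_refl _
  | succ k hik ih =>
    have hk' : k ≤ N / 2 := by omega
    exact (ih hk').trans (Nat.choose_le_succ_of_lt_half_left (by omega))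

lemma sum_caps (L mm : ℕ) (hmmL : mm ≤ L) :
    ∑ ℓ ∈ Finset.range L, ∑ i ∈ Finset.range (mm+1), (2*ℓ).choose i
      ≤ L * ((mm+1) * (2*L).choose mm) := by
  have hinner : ∀ ℓ ∈ Finset.range L,
      ∑ i ∈ Finset.range (mm+1), (2*ℓ).choose i ≤ (mm+1) * (2*L).choose mm := by
    intro ℓ hℓ
    rw [Finset.mem_range] at hℓ
    calc ∑ i ∈ Finset.range (mm+1), (2*ℓ).choose i
        ≤ ∑ _i ∈ Finset.range (mm+1), (2*L).choose mm := by
          apply Finset.sum_le_sum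
          intro i hi
          rw [Finset.mem_range] at hi
          calc (2*ℓ).choose i ≤ (2*L).choose i :=
                Nat.choose_le_choose i (by omega)
            _ ≤ (2*L).choose mm := choose_mono_half (by omega) (by omega)
      _ = (mm+1) * (2*L).choose mm := by
          rw [Finset.sum_const, Finset.card_range, smul_eq_mul]
  calc ∑ ℓ ∈ Finset.range L, ∑ i ∈ Finset.range (mm+1), (2*ℓ).choose i
      ≤ ∑ _ℓ ∈ Finset.range L, (mm+1) * (2*L).choose mm :=
        Finset.sum_le_sum hinner
    _ = L * ((mm+1) * (2*L).choose mm) := by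
        rw [Finset.sum_const, Finset.card_range, smul_eq_mul]

lemma choose_lower (n r : ℕ) : (n + 1 - r)^r ≤ n.choose r * r^r := by
  have h1 : (n + 1 - r)^r ≤ n.descFactorial r := Nat.pow_sub_le_descFactorial n r
  have h2 : n.descFactorial r = r.factorial * n.choose r :=
    Nat.descFactorial_eq_factorial_mul_choose n r
  have h3 : r.factorial ≤ r^r := Nat.factorial_le_pow r
  calc (n + 1 - r)^r ≤ r.factorial * n.choose r := h2 ▸ h1
    _ ≤ r^r * n.choose r := Nat.mul_le_mul_right _ h3
    _ = n.choose r * r^r := Nat.mul_comm _ _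

lemma expLen_ge {r d n : ℕ} (c : AdaptiveLDC r d n) (L : ℕ)
    (hNL : n.choose r * L ≤ 2 * ∑ x : SparseVec n r, (c.enc x).length)
    (hN : 0 < n.choose r) : (L:ℝ)/2 ≤ expLenA c := by
  have hNR : (0:ℝ) < (n.choose r : ℝ) := by exact_mod_cast hN
  have hcast : ((n.choose r : ℕ):ℝ) * (L:ℝ)
      ≤ 2 * ∑ x : SparseVec n r, (((c.enc x).length : ℕ) : ℝ) := by
    exact_mod_cast hNL
  rw [expLenA, div_le_div_iff₀ (by norm_num) hNR]
  linarith

lemma expLen_le {r d n : ℕ} (c : AdaptiveLDC r d n) (B : ℕ)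
    (hB : ∀ x, (c.enc x).length ≤ B) (hN : 0 < n.choose r)
    (hcard : Fintype.card (SparseVec n r) = n.choose r) : expLenA c ≤ B := by
  have hNR : (0:ℝ) < (n.choose r : ℝ) := by exact_mod_cast hN
  rw [expLenA, div_le_iff₀ hNR]
  calc ∑ x : SparseVec n r, (((c.enc x).length : ℕ) : ℝ)
      ≤ ∑ _x : SparseVec n r, (B:ℝ) := by
        apply Finset.sum_le_sum
        intro x _
        exact_mod_cast hB x
    _ = (Fintype.card (SparseVec n r) : ℝ) * B := by
        rw [Finset.sum_const, Finset.card_univ, nsmul_eq_mul]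
    _ = (B:ℝ) * (n.choose r : ℝ) := by rw [hcard]; ring

lemma expLen_nonneg {r d n : ℕ} (c : AdaptiveLDC r d n) : 0 ≤ expLenA c := by
  rw [expLenA]
  apply div_nonneg
  · apply Finset.sum_nonneg
    intro x _
    positivity
  · positivity

end PSS
namespace PSS
open Finset Real

set_option maxHeartbeats 1000000 in
lemma upper_arith (R dR KR LR δ lg A P : ℝ)
    (hδ : 0 < δ) (hlg1 : 1 ≤ lg) (hA1 : 1 ≤ A) (hδlg : 1 ≤ δ*lg)
    (hR0 : 0 ≤ R) (hd0 : 0 ≤ dR) (hK0 : 0 ≤ KR) (hL0 : 0 ≤ LR)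
    (hrup : R ≤ 2*A) (hdup : dR ≤ 2*(δ*lg)) (hKup : KR ≤ 2*P) (hlogle : LR ≤ lg)
    (hP : P = (2:ℝ)^(1/δ)) :
    2*(R*dR)*KR + (R*(LR+1)+1) ≤ 64*P*(δ*A*lg) := by
  have hδinv : 0 ≤ 1/δ := div_nonneg zero_le_one hδ.le
  have hP1 : 1 ≤ P := by
    rw [hP]
    calc (1:ℝ) = (2:ℝ)^(0:ℝ) := (Real.rpow_zero 2).symm
      _ ≤ (2:ℝ)^(1/δ) := Real.rpow_le_rpow_of_exponent_le (by norm_num) hδinv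
  have hP0 : 0 ≤ P := by linarith
  have hA0 : 0 ≤ A := by linarith
  have hlg0 : 0 ≤ lg := by linarith
  have hδlg0 : 0 ≤ δ*lg := by linarith
  -- 1/δ ≤ 2P
  have hinvδ : 1/δ ≤ 2*P := by
    have e1 : P = Real.exp (Real.log 2 * (1/δ)) := by
      rw [hP]; exact Real.rpow_def_of_pos (by norm_num) (1/δ)
    have e2 : Real.log 2 * (1/δ) + 1 ≤ P := by
      rw [e1]; exact Real.add_one_le_exp _
    have hlog2 : (0.6931471803:ℝ) < Real.log 2 := Real.log_two_gt_d9
    have k : (0.6931471803:ℝ)*(1/δ) ≤ Real.log 2*(1/δ) :=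
      mul_le_mul_of_nonneg_right hlog2.le hδinv
    linarith
  -- m part : 2*(R*dR)*KR ≤ 16*P*(δ*A*lg)
  have e1 : R*dR ≤ (2*A)*(2*(δ*lg)) := mul_le_mul hrup hdup hd0 (by linarith)
  have e2 : (R*dR)*KR ≤ ((2*A)*(2*(δ*lg)))*(2*P) := by
    apply mul_le_mul e1 hKup hK0 ?_
    positivity
  have e3 : ((2*A)*(2*(δ*lg)))*(2*P) = 8*(P*(δ*A*lg)) := by ring
  have hm_le : 2*(R*dR)*KR ≤ 16*(P*(δ*A*lg)) := by
    rw [e3] at e2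
    linarith
  -- M part
  have f1 : R*(LR+1) ≤ (2*A)*(2*lg) := by
    apply mul_le_mul hrup (by linarith) (by linarith) (by linarith)
  have f2 : (2*A)*(2*lg) = 4*(A*lg) := by ring
  have hD0 : 0 ≤ δ*A*lg := by positivity
  have hδ2P : 1 ≤ 2*P*δ := by
    have := (div_le_iff₀ hδ).mp hinvδ
    linarith
  have f3 : A*lg ≤ (δ*A*lg)*(2*P) := by
    have g1 : A*lg*1 ≤ A*lg*(2*P*δ) :=
      mul_le_mul_of_nonneg_left hδ2P (by positivity)
    have g2 : A*lg*(2*P*δ) = (δ*A*lg)*(2*P) := by ring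
    linarith
  have hD1 : 1 ≤ δ*A*lg := by
    have g1 : (1:ℝ)*1 ≤ (δ*lg)*A := mul_le_mul hδlg hA1 zero_le_one hδlg0
    have g2 : (δ*lg)*A = δ*A*lg := by ring
    linarith
  have hPD1 : 1 ≤ P*(δ*A*lg) := by
    have := mul_le_mul hP1 hD1 zero_le_one hP0
    linarith
  have hMv_le : R*(LR+1)+1 ≤ 9*(P*(δ*A*lg)) := by
    have g3 : (δ*A*lg)*(2*P) = 2*(P*(δ*A*lg)) := by ring
    have : R*(LR+1) ≤ 8*(P*(δ*A*lg)) := by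
      calc R*(LR+1) ≤ 4*(A*lg) := by linarith
        _ ≤ 4*((δ*A*lg)*(2*P)) := by linarith [f3]
        _ = 8*(P*(δ*A*lg)) := by ring
    linarith
  linarith

set_option maxHeartbeats 1000000 in
lemma lower_code {rr dd nn : ℕ} (c : AdaptiveLDC rr dd nn) (ε δ lg A : ℝ)
    (hδ : 0 < δ) (hε1 : ε < 1)
    (hA40 : 40 ≤ A)
    (hδlg : 1 ≤ δ * lg)
    (hδlgu : (1-ε)/δ ≤ δ * lg)
    (h1ε8 : 8 ≤ (1-ε) * lg)
    (hrlow : A ≤ (rr:ℝ))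
    (hdlow : δ * lg ≤ (dd:ℝ))
    (hdceil : (dd:ℝ) ≤ δ * lg + 1)
    (hNpos : 0 < nn.choose rr)
    (hNlow : (2:ℝ)^(((1-ε)*lg - 2) * (rr:ℝ)) ≤ (nn.choose rr : ℝ)) :
    1/4096 * ((2:ℝ)^((1-ε)/δ) - 1) * (δ * A * lg) ≤ expLenA c := by
  set u : ℝ := (1-ε)/δ with hu
  set D : ℝ := δ * A * lg with hD
  have hupos : 0 < u := div_pos (by linarith) hδ
  have hA1 : (1:ℝ) ≤ A := by linarith
  have hA0 : (0:ℝ) ≤ A := by linarith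
  have hrR1 : (1:ℝ) ≤ (rr:ℝ) := by linarith
  have hr1 : 1 ≤ rr := by exact_mod_cast hrR1
  have hdR1 : (1:ℝ) ≤ (dd:ℝ) := by linarith
  have hd1 : 1 ≤ dd := by exact_mod_cast hdR1
  have hlg0 : 0 < lg := by
    rcases le_or_gt lg 0 with h|h
    · have := mul_nonpos_of_nonneg_of_nonpos hδ.le h
      linarith
    · exact h
  have hDpos : 0 < D := by rw [hD]; positivity
  have huδε : u * δ = 1 - ε := by rw [hu, div_mul_cancel₀ _ (ne_of_gt hδ)]
  by_cases hcase : u ≤ 10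
  · -- regime 1 : entropy bound
    set y : ℝ := ((1-ε)*lg - 2) * (rr:ℝ) with hydef
    have hfac : (0:ℝ) ≤ (1-ε)*lg - 2 := by linarith
    have hy6 : 6 ≤ y := by
      have g1 : (6:ℝ)*1 ≤ ((1-ε)*lg - 2)*(rr:ℝ) :=
        mul_le_mul (by linarith) hrR1 zero_le_one hfac
      rw [hydef]; linarith
    have hfl6 : 6 ≤ ⌊y⌋₊ := Nat.le_floor (by exact_mod_cast hy6)
    set L₁ : ℕ := ⌊y⌋₊ - 1 with hL₁def
    have hL₁cast : (L₁:ℝ) = (⌊y⌋₊:ℝ) - 1 := by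
      rw [hL₁def]
      have h1 : 1 ≤ ⌊y⌋₊ := by omega
      push_cast [h1]
      ring
    have hL1y : (L₁:ℝ) + 1 ≤ y := by
      rw [hL₁cast]
      have := Nat.floor_le (by linarith : (0:ℝ) ≤ y)
      linarith
    have hL1low : y - 2 ≤ (L₁:ℝ) := by
      rw [hL₁cast]
      have := Nat.sub_one_lt_floor y
      linarith
    have hgeo : ∀ Lx : ℕ, (∑ ℓ ∈ Finset.range Lx, 2^ℓ) + 1 = 2^Lx := by
      intro Lx
      induction Lx with
      | zero => simp
      | succ Lz ih =>
        rw [Finset.sum_range_succ, pow_succ]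
        omega
    have hsum : 2 * ∑ ℓ ∈ Finset.range L₁, 2^ℓ ≤ nn.choose rr := by
      have hpow : (2:ℕ)^(L₁+1) ≤ nn.choose rr := by
        have hR : ((2:ℕ)^(L₁+1) : ℝ) ≤ (nn.choose rr : ℝ) := by
          have e : ((2:ℕ)^(L₁+1) : ℝ) = (2:ℝ)^(((L₁+1:ℕ)):ℝ) := by
            rw [Real.rpow_natCast]
            push_cast
            ring
          rw [e]
          refine le_trans ?_ hNlow
          apply Real.rpow_le_rpow_of_exponent_le (by norm_num)
          rw [hydef] at hL1y
          push_cast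
          linarith
        exact_mod_cast hR
      have hg := hgeo L₁
      have : 2 * ((∑ ℓ ∈ Finset.range L₁, 2^ℓ) + 1) = 2^(L₁+1) := by
        rw [hg, pow_succ]
        ring
      omega
    have hNL := PSS.sum_len_lb c L₁ (fun ℓ => 2^ℓ)
      (fun ℓ => PSS.card_cls_le_pow c ℓ) hsum
    have hE := PSS.expLen_ge c L₁ hNL hNpos
    have h2u : (2:ℝ)^u ≤ 1024 := by
      calc (2:ℝ)^u ≤ (2:ℝ)^(10:ℝ) :=
            Real.rpow_le_rpow_of_exponent_le (by norm_num) hcase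
        _ = 1024 := by norm_num
    have hlog2 : Real.log 2 ≤ 1 := by
      have := Real.log_two_lt_d9
      linarith
    have hlog2pos : 0 < Real.log 2 := Real.log_pos (by norm_num)
    have hexp1 : (2:ℝ)^u - 1 ≤ (u * Real.log 2) * (2:ℝ)^u := by
      set x : ℝ := u * Real.log 2 with hxdef
      have hx0 : 0 ≤ x := by positivity
      have he : (2:ℝ)^u = Real.exp x := by
        rw [Real.rpow_def_of_pos (by norm_num : (0:ℝ) < 2), hxdef]
        ring_nf
      have h1 : -x + 1 ≤ Real.exp (-x) := Real.add_one_le_exp (-x)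
      have h2 : Real.exp (-x) * Real.exp x = 1 := by
        rw [← Real.exp_add]
        simp
      have h3 : (-x + 1) * Real.exp x ≤ 1 := by
        calc (-x + 1) * Real.exp x ≤ Real.exp (-x) * Real.exp x :=
              mul_le_mul_of_nonneg_right h1 (Real.exp_pos x).le
          _ = 1 := h2
      rw [he]
      linarith [h3]
    have h2um : (2:ℝ)^u - 1 ≤ 1024 * u := by
      have h2upos : (0:ℝ) ≤ (2:ℝ)^u := by positivity
      have k1 : Real.log 2 * (2:ℝ)^u ≤ 1 * 1024 :=
        mul_le_mul hlog2 h2u h2upos zero_le_one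
      have k2 : u * (Real.log 2 * (2:ℝ)^u) ≤ u * 1024 :=
        mul_le_mul_of_nonneg_left (by linarith) hupos.le
      have k3 : (u * Real.log 2) * (2:ℝ)^u = u * (Real.log 2 * (2:ℝ)^u) := by ring
      linarith
    have hEy : (y - 2)/2 ≤ expLenA c := by
      refine le_trans ?_ hE
      linarith
    have hyA : ((1-ε)/2) * (A * lg) ≤ y - 2 := by
      have h1 : ((1-ε)*lg - 2) * A ≤ ((1-ε)*lg - 2) * (rr:ℝ) :=
        mul_le_mul_of_nonneg_left hrlow hfac
      have k1 : 4*A ≤ ((1-ε)*lg/2)*A :=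
        mul_le_mul_of_nonneg_right (by linarith) hA0
      rw [hydef]
      linarith [h1, k1, hA1]
    have hfinal : 1/4096 * ((2:ℝ)^u - 1) * D ≤ (y-2)/2 := by
      have hDn : 0 ≤ D := hDpos.le
      have w1 : ((2:ℝ)^u - 1) * D ≤ (1024*u) * D :=
        mul_le_mul_of_nonneg_right h2um hDn
      have w2 : (1024*u)*D/4096 = (u*D)/4 := by ring
      have w3 : u*D = (1-ε) * (A*lg) := by
        rw [hD]
        calc u*(δ*A*lg) = (u*δ)*(A*lg) := by ring
          _ = (1-ε)*(A*lg) := by rw [huδε]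
      linarith [w1, w2, w3, hyA]
    exact le_trans hfinal hEy
  · -- regime 2 : decision-tree counting bound
    push_neg at hcase
    have h2u1024 : (1024:ℝ) ≤ (2:ℝ)^u := by
      calc (1024:ℝ) = (2:ℝ)^(10:ℝ) := by norm_num
        _ ≤ (2:ℝ)^u := Real.rpow_le_rpow_of_exponent_le (by norm_num) hcase.le
    set K' : ℕ := ⌊(2:ℝ)^u/64⌋₊ with hK'def
    have hK'16 : 16 ≤ K' := Nat.le_floor (by push_cast; linarith)
    have hK'up : (K':ℝ) ≤ (2:ℝ)^u/64 := Nat.floor_le (by positivity)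
    have hK'low : (2:ℝ)^u/128 ≤ (K':ℝ) := by
      have h1 : (2:ℝ)^u/64 < (K':ℝ) + 1 := Nat.lt_floor_add_one _
      linarith
    set mm : ℕ := rr*dd with hmmdef
    have hmm1 : 1 ≤ mm := Nat.mul_pos hr1 hd1
    have hmmR : (mm:ℝ) = (rr:ℝ)*(dd:ℝ) := by rw [hmmdef]; push_cast; ring
    set Lc : ℕ := mm * K' with hLcdef
    have hmmLc : mm ≤ Lc := by
      rw [hLcdef]
      calc mm = mm * 1 := (Nat.mul_one mm).symm
        _ ≤ mm * K' := Nat.mul_le_mul_left mm (by omega)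
    set z : ℝ := (rr:ℝ)*(δ*lg) with hz_eq
    have hz40 : 40 ≤ z := by
      have g1 : A*1 ≤ (rr:ℝ)*(δ*lg) :=
        mul_le_mul hrlow hδlg zero_le_one (by linarith)
      rw [hz_eq]; linarith
    have hzu : u ≤ z := by
      have g1 : (1:ℝ)*(δ*lg) ≤ (rr:ℝ)*(δ*lg) :=
        mul_le_mul_of_nonneg_right hrR1 (by linarith)
      rw [hz_eq]; linarith
    have hz0 : 0 ≤ z := by linarith
    have h9z := PSS.sq_le_rpow hz40
    have h2z : (2:ℝ)^u ≤ (2:ℝ)^z := Real.rpow_le_rpow_of_exponent_le (by norm_num) hzu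
    have hKey : 2*(Lc:ℝ)*((mm:ℝ)+1)*((6:ℝ)*(K':ℝ))^mm ≤ (nn.choose rr : ℝ) := by
      have h6K : (6:ℝ)*(K':ℝ) ≤ (2:ℝ)^(u-3) := by
        have e : (2:ℝ)^(u-3) = (2:ℝ)^u/8 := by
          rw [Real.rpow_sub (by norm_num : (0:ℝ) < 2)]
          norm_num
        rw [e]
        linarith
      have h6K0 : (0:ℝ) ≤ 6*(K':ℝ) := by positivity
      have h6Kpow : ((6:ℝ)*(K':ℝ))^mm ≤ (2:ℝ)^((u-3)*(mm:ℝ)) := by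
        calc ((6:ℝ)*(K':ℝ))^mm ≤ ((2:ℝ)^(u-3))^mm :=
              pow_le_pow_left₀ h6K0 h6K mm
          _ = (2:ℝ)^((u-3)*(mm:ℝ)) := by
              rw [Real.rpow_mul (by norm_num : (0:ℝ) ≤ 2), Real.rpow_natCast]
      have hrr0 : (0:ℝ) ≤ (rr:ℝ) := by linarith
      have hmm_up : (mm:ℝ) ≤ (rr:ℝ)*(δ*lg+1) := by
        rw [hmmR]
        exact mul_le_mul_of_nonneg_left hdceil hrr0
      have hmm_up2 : (mm:ℝ) ≤ 2*z := by
        have g1 : (rr:ℝ)*(dd:ℝ) ≤ (rr:ℝ)*(2*(δ*lg)) :=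
          mul_le_mul_of_nonneg_left (by linarith) hrr0
        rw [hmmR, hz_eq]; linarith
      have hu3 : (0:ℝ) ≤ u - 3 := by linarith
      have hexp_le : (u-3)*(mm:ℝ) ≤ (u-3)*((rr:ℝ)*(δ*lg+1)) :=
        mul_le_mul_of_nonneg_left hmm_up hu3
      have hru : (rr:ℝ)*u ≤ z := by
        have g1 : (rr:ℝ)*u ≤ (rr:ℝ)*(δ*lg) := mul_le_mul_of_nonneg_left hδlgu hrr0
        rw [hz_eq]; linarith
      have hexpfin : 1+z+z+(u-3)*(mm:ℝ) ≤ ((1-ε)*lg - 2)*(rr:ℝ) := by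
        have expand : (u-3)*((rr:ℝ)*(δ*lg+1))
            = (u*δ)*lg*(rr:ℝ) - 3*((rr:ℝ)*(δ*lg)) + u*(rr:ℝ) - 3*(rr:ℝ) := by ring
        rw [expand, huδε] at hexp_le
        have hzz : (rr:ℝ)*(δ*lg) = z := hz_eq.symm
        rw [hzz] at hexp_le
        have : (1-ε)*lg*(rr:ℝ) = ((1-ε)*lg - 2)*(rr:ℝ) + 2*(rr:ℝ) := by ring
        linarith [hru, hrR1]
      have hfront : 2*(Lc:ℝ)*((mm:ℝ)+1) ≤ 16*z^2*(2:ℝ)^u := by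
        have hLcR : (Lc:ℝ) = (mm:ℝ)*(K':ℝ) := by rw [hLcdef]; push_cast; ring
        have hmm1R : (1:ℝ) ≤ (mm:ℝ) := by exact_mod_cast hmm1
        have hK'0 : (0:ℝ) ≤ (K':ℝ) := by positivity
        have h2u0 : (0:ℝ) ≤ (2:ℝ)^u := by positivity
        have hLz : (mm:ℝ)*(K':ℝ) ≤ (2*z)*((2:ℝ)^u/64) :=
          mul_le_mul hmm_up2 hK'up hK'0 (by linarith)
        have c1 : (mm:ℝ)+1 ≤ 4*z := by linarith
        have c2 : 2*((mm:ℝ)*(K':ℝ)) ≤ 2*((2*z)*((2:ℝ)^u/64)) := by linarith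
        have c3 : (2*((mm:ℝ)*(K':ℝ)))*((mm:ℝ)+1)
            ≤ (2*((2*z)*((2:ℝ)^u/64)))*(4*z) := by
          apply mul_le_mul c2 c1 (by linarith) ?_
          positivity
        have c4 : (2*((2*z)*((2:ℝ)^u/64)))*(4*z) = z^2*(2:ℝ)^u/4 := by ring
        have c5 : (0:ℝ) ≤ z^2*(2:ℝ)^u := by positivity
        rw [hLcR]
        linarith [c3, c4, c5]
      have hpow1 : 16*z^2 ≤ 2*(2:ℝ)^z := by linarith [h9z, sq_nonneg z]
      have h2z0 : (0:ℝ) ≤ (2:ℝ)^z := by positivity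
      have h2u0 : (0:ℝ) ≤ (2:ℝ)^u := by positivity
      have hpowfront : 16*z^2*(2:ℝ)^u ≤ 2*(2:ℝ)^z*(2:ℝ)^z := by
        calc 16*z^2*(2:ℝ)^u ≤ (2*(2:ℝ)^z)*(2:ℝ)^u :=
              mul_le_mul_of_nonneg_right hpow1 h2u0
          _ ≤ (2*(2:ℝ)^z)*(2:ℝ)^z := by
              apply mul_le_mul_of_nonneg_left h2z (by positivity)
          _ = 2*(2:ℝ)^z*(2:ℝ)^z := by ring
      have hcollect : 2*(2:ℝ)^z*(2:ℝ)^z*(2:ℝ)^((u-3)*(mm:ℝ))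
          = (2:ℝ)^(1+z+z+(u-3)*(mm:ℝ)) := by
        rw [Real.rpow_add (by norm_num : (0:ℝ) < 2),
          Real.rpow_add (by norm_num : (0:ℝ) < 2),
          Real.rpow_add (by norm_num : (0:ℝ) < 2), Real.rpow_one]
      have hfinalpow : (2:ℝ)^(1+z+z+(u-3)*(mm:ℝ)) ≤ (nn.choose rr : ℝ) :=
        le_trans (Real.rpow_le_rpow_of_exponent_le (by norm_num) hexpfin) hNlow
      have hmul1 : 2*(Lc:ℝ)*((mm:ℝ)+1)*((6:ℝ)*(K':ℝ))^mm
          ≤ (16*z^2*(2:ℝ)^u)*(2:ℝ)^((u-3)*(mm:ℝ)) := by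
        apply mul_le_mul hfront h6Kpow (by positivity) (by positivity)
      have hmul2 : (16*z^2*(2:ℝ)^u)*(2:ℝ)^((u-3)*(mm:ℝ))
          ≤ (2*(2:ℝ)^z*(2:ℝ)^z)*(2:ℝ)^((u-3)*(mm:ℝ)) :=
        mul_le_mul_of_nonneg_right hpowfront (by positivity)
      calc 2*(Lc:ℝ)*((mm:ℝ)+1)*((6:ℝ)*(K':ℝ))^mm
          ≤ (16*z^2*(2:ℝ)^u)*(2:ℝ)^((u-3)*(mm:ℝ)) := hmul1
        _ ≤ (2*(2:ℝ)^z*(2:ℝ)^z)*(2:ℝ)^((u-3)*(mm:ℝ)) := hmul2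
        _ = (2:ℝ)^(1+z+z+(u-3)*(mm:ℝ)) := hcollect
        _ ≤ (nn.choose rr : ℝ) := hfinalpow
    have hsumN : 2 * ∑ ℓ ∈ Finset.range Lc,
        (∑ i ∈ Finset.range (mm+1), (2*ℓ).choose i) ≤ nn.choose rr := by
      have s1 := PSS.sum_caps Lc mm hmmLc
      have cb := PSS.choose_2L_bound mm K' hmm1
      have key2 : ((2 * (Lc * ((mm+1) * (2*Lc).choose mm)) : ℕ) : ℝ)
          ≤ (nn.choose rr : ℝ) := by
        have e : ((2 * (Lc * ((mm+1) * (2*Lc).choose mm)) : ℕ) : ℝ)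
            = 2*(Lc:ℝ)*((mm:ℝ)+1)*(((2*Lc).choose mm : ℕ):ℝ) := by
          push_cast
          ring
        rw [e]
        have h2Lc : (2*Lc) = 2*(mm*K') := by rw [hLcdef]
        have hch : (((2*Lc).choose mm : ℕ):ℝ) ≤ ((6:ℝ)*(K':ℝ))^mm := by
          rw [h2Lc]
          exact_mod_cast cb
        have hnn0 : (0:ℝ) ≤ 2*(Lc:ℝ)*((mm:ℝ)+1) := by positivity
        calc 2*(Lc:ℝ)*((mm:ℝ)+1)*(((2*Lc).choose mm : ℕ):ℝ)
            ≤ 2*(Lc:ℝ)*((mm:ℝ)+1)*(((6:ℝ)*(K':ℝ))^mm) :=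
              mul_le_mul_of_nonneg_left hch hnn0
          _ ≤ (nn.choose rr : ℝ) := hKey
      have key2N : 2 * (Lc * ((mm+1) * (2*Lc).choose mm)) ≤ nn.choose rr := by
        exact_mod_cast key2
      calc 2 * ∑ ℓ ∈ Finset.range Lc, (∑ i ∈ Finset.range (mm+1), (2*ℓ).choose i)
          ≤ 2 * (Lc * ((mm+1) * (2*Lc).choose mm)) := Nat.mul_le_mul_left 2 s1
        _ ≤ nn.choose rr := key2N
    have hNL2 := PSS.sum_len_lb c Lc
      (fun ℓ => ∑ i ∈ Finset.range (mm+1), (2*ℓ).choose i)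
      (fun ℓ => by rw [hmmdef]; exact PSS.card_cls_le_cert c ℓ) hsumN
    have hE2 := PSS.expLen_ge c Lc hNL2 hNpos
    have hLcR : (Lc:ℝ) = (mm:ℝ)*(K':ℝ) := by rw [hLcdef]; push_cast; ring
    have hABD : A*(δ*lg) = D := by rw [hD]; ring
    have hmmAB : A*(δ*lg) ≤ (mm:ℝ) := by
      rw [hmmR]
      exact mul_le_mul hrlow hdlow (by linarith) (by linarith)
    have hLlow : D*((2:ℝ)^u/128) ≤ (Lc:ℝ) := by
      rw [hLcR, ← hABD]
      apply mul_le_mul hmmAB hK'low (by positivity) ?_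
      exact le_trans (by positivity) hmmAB
    have hXpos : (0:ℝ) ≤ D*(2:ℝ)^u := by positivity
    have hgoal' : 1/4096*((2:ℝ)^u - 1)*D ≤ D*(2:ℝ)^u/256 := by
      linarith [hDpos.le, hXpos]
    calc 1/4096*((2:ℝ)^u - 1)*D ≤ D*(2:ℝ)^u/256 := hgoal'
      _ ≤ (Lc:ℝ)/2 := by linarith
      _ ≤ expLenA c := hE2

end PSS
open Filter in
set_option maxHeartbeats 2000000 in
/-- With `rₙ = ⌈n^ε⌉` and `dₙ = ⌈δ log₂ n⌉`, the optimal expected length `L*ₙ` of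
adaptive `(rₙ,dₙ,n)`-locally decodable codes satisfies
`C₁ (2^{(1−ε)/δ} − 1) ≤ L*ₙ / (δ n^ε log₂ n) ≤ C₂ 2^{1/δ}` for large `n`, where
`C₁, C₂ > 0` are absolute constants not depending on `ε` or `δ`. -/
theorem polynomial_sparsity_scaling :
    ∃ C1 C2 : ℝ, 0 < C1 ∧ 0 < C2 ∧
      ∀ ε δ : ℝ, 0 < ε → ε < 1 → 0 < δ →
        ∀ᶠ n : ℕ in atTop,
          C1 * ((2 : ℝ) ^ ((1 - ε) / δ) - 1) ≤
            sInf {L : ℝ | ∃ c : AdaptiveLDC ⌈(n : ℝ) ^ ε⌉₊ ⌈δ * Real.logb 2 n⌉₊ n,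
                expLenA c = L} /
              (δ * (n : ℝ) ^ ε * Real.logb 2 n) ∧
          sInf {L : ℝ | ∃ c : AdaptiveLDC ⌈(n : ℝ) ^ ε⌉₊ ⌈δ * Real.logb 2 n⌉₊ n,
                expLenA c = L} /
              (δ * (n : ℝ) ^ ε * Real.logb 2 n) ≤
            C2 * (2 : ℝ) ^ (1 / δ) := by
  classical
  refine ⟨1/4096, 64, by norm_num, by norm_num, ?_⟩
  intro ε δ hε hε1 hδ
  set u : ℝ := (1 - ε) / δ with hu
  have hupos : 0 < u := div_pos (by linarith) hδ
  have hev1 : ∀ᶠ n : ℕ in atTop, (40:ℝ) ≤ (n:ℝ)^ε :=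
    ((tendsto_rpow_atTop hε).comp tendsto_natCast_atTop_atTop).eventually_ge_atTop 40
  have hev2 : ∀ᶠ n : ℕ in atTop, (4:ℝ) ≤ (n:ℝ)^(1-ε) :=
    ((tendsto_rpow_atTop (by linarith)).comp
      tendsto_natCast_atTop_atTop).eventually_ge_atTop 4
  have hev3 : ∀ᶠ n : ℕ in atTop, 1 + 1/δ + 8/(1-ε) + u/δ ≤ Real.logb 2 (n:ℝ) :=
    ((Real.tendsto_logb_atTop (by norm_num)).comp
      tendsto_natCast_atTop_atTop).eventually_ge_atTop _
  have hev4 : ∀ᶠ n : ℕ in atTop, 2 ≤ n := eventually_ge_atTop 2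
  filter_upwards [hev1, hev2, hev3, hev4] with n h40 h4nε hlgbig h2n
  set lg : ℝ := Real.logb 2 (n:ℝ) with hlgdef
  set r : ℕ := ⌈(n:ℝ)^ε⌉₊ with hrdef
  set d : ℕ := ⌈δ * lg⌉₊ with hddef
  set D : ℝ := δ * (n:ℝ)^ε * lg with hDdef
  have hδinv : 0 ≤ 1/δ := div_nonneg zero_le_one hδ.le
  have h8eps : 0 ≤ 8/(1-ε) := div_nonneg (by norm_num) (by linarith)
  have huδ : 0 ≤ u/δ := div_nonneg hupos.le hδ.le
  have hlg1 : 1 ≤ lg := by linarith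
  have hδlg : 1 ≤ δ * lg := by
    have h1 : 1/δ ≤ lg := by linarith
    have h2 := (div_le_iff₀ hδ).mp h1
    linarith
  have hδlgu : u ≤ δ * lg := by
    have h1 : u/δ ≤ lg := by linarith
    have h2 := (div_le_iff₀ hδ).mp h1
    linarith
  have h1ε8 : 8 ≤ (1-ε) * lg := by
    have h1 : 8/(1-ε) ≤ lg := by linarith
    have h2 := (div_le_iff₀ (by linarith : (0:ℝ) < 1-ε)).mp h1
    linarith
  have hnε1 : 1 ≤ (n:ℝ)^ε := by linarith
  have hn2R : (2:ℝ) ≤ (n:ℝ) := by exact_mod_cast h2n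
  have hnpos : (0:ℝ) < (n:ℝ) := by linarith
  have hrlow : (n:ℝ)^ε ≤ (r:ℝ) := Nat.le_ceil _
  have hrup : (r:ℝ) ≤ 2 * (n:ℝ)^ε := by
    have h1 : (r:ℝ) < (n:ℝ)^ε + 1 := Nat.ceil_lt_add_one (by positivity)
    linarith
  have hr1 : 1 ≤ r := by
    have : (1:ℝ) ≤ (r:ℝ) := le_trans hnε1 hrlow
    exact_mod_cast this
  have hdlow : δ * lg ≤ (d:ℝ) := Nat.le_ceil _
  have hdceil : (d:ℝ) ≤ δ * lg + 1 := by
    have h1 : (d:ℝ) < δ * lg + 1 := Nat.ceil_lt_add_one (by positivity)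
    linarith
  have hdup : (d:ℝ) ≤ 2 * (δ * lg) := by linarith
  have hd1 : 1 ≤ d := by
    have : (1:ℝ) ≤ (d:ℝ) := le_trans hδlg hdlow
    exact_mod_cast this
  have hnsplit : (n:ℝ)^(1-ε) * (n:ℝ)^ε = (n:ℝ) := by
    rw [← Real.rpow_add hnpos]
    norm_num
  have h2rn : 2 * r ≤ n := by
    have hR : (2:ℝ) * (r:ℝ) ≤ (n:ℝ) := by
      have w1 : (2:ℝ)*(r:ℝ) ≤ 4*(n:ℝ)^ε := by linarith
      have w2 : 4*(n:ℝ)^ε ≤ (n:ℝ)^(1-ε)*(n:ℝ)^ε :=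
        mul_le_mul_of_nonneg_right h4nε (by positivity)
      rw [hnsplit] at w2
      linarith
    exact_mod_cast hR
  have hrn : r ≤ n := by omega
  have hNpos : 0 < n.choose r := Nat.choose_pos hrn
  have hDpos : 0 < D := by
    rw [hDdef]
    have w1 : (0:ℝ) < (n:ℝ)^ε := by positivity
    have w2 : (0:ℝ) < lg := by linarith
    positivity
  have hnlg : (n:ℝ) = (2:ℝ)^lg := by
    rw [hlgdef, Real.rpow_logb (by norm_num) (by norm_num) hnpos]
  have hrR1 : (1:ℝ) ≤ (r:ℝ) := by exact_mod_cast hr1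
  have hdR1 : (1:ℝ) ≤ (d:ℝ) := by exact_mod_cast hd1
  have hrR0 : (0:ℝ) < (r:ℝ) := by linarith
  have hdR0 : (0:ℝ) < (d:ℝ) := by linarith
  -- lower bound on the number of sparse vectors
  have hNlow : (2:ℝ)^(((1-ε)*lg - 2) * (r:ℝ)) ≤ (n.choose r : ℝ) := by
    have h1n := PSS.choose_lower n r
    have h1 : (((n + 1 - r : ℕ)):ℝ)^r ≤ (n.choose r : ℝ) * (r:ℝ)^r := by
      exact_mod_cast h1n
    have h2 : (((n + 1 - r : ℕ)):ℝ) = (n:ℝ) + 1 - (r:ℝ) := by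
      have hle : r ≤ n + 1 := by omega
      push_cast [hle]
      ring
    have h2r : (2:ℝ)*(r:ℝ) ≤ (n:ℝ) := by exact_mod_cast h2rn
    have h3 : (n:ℝ)/2 ≤ (n:ℝ) + 1 - (r:ℝ) := by linarith
    have h4 : ((n:ℝ)/2)^r ≤ (n.choose r : ℝ) * (r:ℝ)^r := by
      refine le_trans (pow_le_pow_left₀ (by positivity) h3 r) ?_
      rw [← h2]
      exact h1
    have h5 : ((n:ℝ)/(2*(r:ℝ)))^r * (r:ℝ)^r = ((n:ℝ)/2)^r := by
      rw [← mul_pow]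
      congr 1
      field_simp
    have h6 : ((n:ℝ)/(2*(r:ℝ)))^r ≤ (n.choose r : ℝ) := by
      have hp : (0:ℝ) < (r:ℝ)^r := by positivity
      have hmul : ((n:ℝ)/(2*(r:ℝ)))^r * (r:ℝ)^r ≤ (n.choose r : ℝ) * (r:ℝ)^r := by
        rw [h5]; exact h4
      exact le_of_mul_le_mul_right hmul hp
    have e1 : (n:ℝ)^(1-ε) = (2:ℝ)^((1-ε)*lg) := by
      rw [hnlg, ← Real.rpow_mul (by norm_num : (0:ℝ) ≤ 2), mul_comm]
    have e2 : (2:ℝ)^((1-ε)*lg - 2) = (n:ℝ)^(1-ε)/4 := by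
      rw [Real.rpow_sub (by norm_num : (0:ℝ) < 2), e1]
      norm_num
    have h7 : (2:ℝ)^((1-ε)*lg - 2) ≤ (n:ℝ)/(2*(r:ℝ)) := by
      rw [e2]
      have hA0 : (0:ℝ) < (n:ℝ)^ε := by positivity
      have hpos1 : (0:ℝ) < 4*(n:ℝ)^ε := by positivity
      have hpos2 : (0:ℝ) < 2*(r:ℝ) := by positivity
      have hstep1 : (n:ℝ)/(4*(n:ℝ)^ε) ≤ (n:ℝ)/(2*(r:ℝ)) := by
        rw [div_le_div_iff₀ hpos1 hpos2]
        have w1 : 2*(r:ℝ) ≤ 4*(n:ℝ)^ε := by linarith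
        exact mul_le_mul_of_nonneg_left w1 hnpos.le
      have hstep2 : (n:ℝ)^(1-ε)/4 = (n:ℝ)/(4*(n:ℝ)^ε) := by
        rw [div_eq_div_iff (by norm_num : (4:ℝ) ≠ 0) (ne_of_gt hpos1)]
        linear_combination 4*hnsplit
      rw [hstep2]
      exact hstep1
    have h8 : ((2:ℝ)^((1-ε)*lg - 2))^r ≤ ((n:ℝ)/(2*(r:ℝ)))^r :=
      pow_le_pow_left₀ (by positivity) h7 r
    have h9 : ((2:ℝ)^((1-ε)*lg - 2))^r = (2:ℝ)^(((1-ε)*lg - 2) * (r:ℝ)) := by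
      rw [Real.rpow_mul (by norm_num : (0:ℝ) ≤ 2), Real.rpow_natCast]
    rw [← h9]
    exact le_trans h8 h6
  -- ===== upper bound construction =====
  set K : ℕ := ⌈(n:ℝ)^((d:ℝ)⁻¹)⌉₊ with hKdef
  have hKlow : (n:ℝ)^((d:ℝ)⁻¹) ≤ (K:ℝ) := Nat.le_ceil _
  have hn1R : (1:ℝ) ≤ (n:ℝ) := by linarith
  have hrpK1 : (1:ℝ) ≤ (n:ℝ)^((d:ℝ)⁻¹) := by
    calc (1:ℝ) = (1:ℝ)^((d:ℝ)⁻¹) := (Real.one_rpow _).symm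
      _ ≤ (n:ℝ)^((d:ℝ)⁻¹) := Real.rpow_le_rpow (by norm_num) hn1R (by positivity)
  have hK1 : 1 ≤ K := by
    have : (1:ℝ) ≤ (K:ℝ) := le_trans hrpK1 hKlow
    exact_mod_cast this
  have hKn : n ≤ K^d := by
    have e : ((n:ℝ)^((d:ℝ)⁻¹))^(d:ℕ) = (n:ℝ) := by
      rw [← Real.rpow_natCast ((n:ℝ)^((d:ℝ)⁻¹)) d, ← Real.rpow_mul hnpos.le,
        inv_mul_cancel₀ (by positivity : (d:ℝ) ≠ 0), Real.rpow_one]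
    have hp : (n:ℝ) ≤ (K:ℝ)^(d:ℕ) := by
      rw [← e]
      exact pow_le_pow_left₀ (by positivity) hKlow d
    exact_mod_cast hp
  set m : ℕ := 2*(r*d)*K with hmdef
  have hrdpos : 0 < r*d := Nat.mul_pos hr1 hd1
  have hmpos : 0 < m := by positivity
  have hm2 : 2*(n*(r*d)^d) ≤ m^d := by
    have h2d : 2 ≤ 2^d := by
      calc 2 = 2^1 := (pow_one 2).symm
        _ ≤ 2^d := Nat.pow_le_pow_right (by norm_num) hd1
    have e : m^d = 2^d * ((r*d)^d * K^d) := by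
      rw [hmdef, mul_pow, mul_pow]
      ring
    rw [e]
    calc 2*(n*(r*d)^d) = 2*((r*d)^d * n) := by ring
      _ ≤ 2^d * ((r*d)^d * K^d) :=
          Nat.mul_le_mul h2d (Nat.mul_le_mul_left _ hKn)
  set Mv : ℕ := r*(Nat.log 2 n + 1) + 1 with hMvdef
  have hMvpos : 0 < Mv := by positivity
  have hCM : n.choose r < 2^Mv := by
    have h1 : n.choose r ≤ n^r := Nat.choose_le_pow n r
    have h2 : n < 2^(Nat.log 2 n + 1) := Nat.lt_pow_succ_log_self (by norm_num) n
    have h3 : n^r < (2^(Nat.log 2 n + 1))^r := Nat.pow_lt_pow_left h2 (by omega)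
    have h4 : (2^(Nat.log 2 n+1))^r = 2^((Nat.log 2 n+1)*r) := (pow_mul 2 _ r).symm
    have h5 : 2^((Nat.log 2 n+1)*r) ≤ 2^(Mv - 1) := by
      apply Nat.pow_le_pow_right (by norm_num)
      rw [hMvdef, Nat.mul_comm]
      omega
    have h6 : 2^(Mv-1) < 2^Mv := Nat.pow_lt_pow_right (by norm_num) (by omega)
    omega
  obtain ⟨c₀, hc₀⟩ := PSS.exists_code n r d m Mv hmpos hMvpos hrdpos hm2 hCM
  have hSbdd : BddBelow {L : ℝ | ∃ c : AdaptiveLDC r d n, expLenA c = L} := by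
    refine ⟨0, ?_⟩
    rintro L ⟨c, rfl⟩
    exact PSS.expLen_nonneg c
  have hSne : Set.Nonempty {L : ℝ | ∃ c : AdaptiveLDC r d n, expLenA c = L} :=
    ⟨expLenA c₀, c₀, rfl⟩
  constructor
  · -- lower bound
    rw [le_div_iff₀ hDpos]
    apply le_csInf hSne
    rintro b ⟨c, rfl⟩
    have := PSS.lower_code c ε δ lg ((n:ℝ)^ε) hδ hε1 h40 hδlg hδlgu h1ε8
      hrlow hdlow hdceil hNpos hNlow
    rw [hDdef]
    calc 1/4096 * ((2:ℝ)^u - 1) * (δ * (n:ℝ)^ε * lg)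
        = 1/4096 * ((2:ℝ)^((1-ε)/δ) - 1) * (δ * (n:ℝ)^ε * lg) := by rw [← hu]
      _ ≤ expLenA c := this
  · -- upper bound
    rw [div_le_iff₀ hDpos]
    have h1 : sInf {L : ℝ | ∃ c : AdaptiveLDC r d n, expLenA c = L} ≤ expLenA c₀ :=
      csInf_le hSbdd ⟨c₀, rfl⟩
    have h2 : expLenA c₀ ≤ ((m + Mv : ℕ) : ℝ) :=
      PSS.expLen_le c₀ (m+Mv) hc₀ hNpos PSS.card_sparseVec
    have hKup : (K:ℝ) ≤ 2*(2:ℝ)^(1/δ) := by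
      have h1' : (K:ℝ) < (n:ℝ)^((d:ℝ)⁻¹) + 1 := Nat.ceil_lt_add_one (by positivity)
      have h2' : (n:ℝ)^((d:ℝ)⁻¹) ≤ (2:ℝ)^(1/δ) := by
        have e : (n:ℝ)^((d:ℝ)⁻¹) = (2:ℝ)^(lg*(d:ℝ)⁻¹) := by
          rw [hnlg, ← Real.rpow_mul (by norm_num : (0:ℝ) ≤ 2)]
        rw [e]
        apply Real.rpow_le_rpow_of_exponent_le (by norm_num)
        have hlgd : lg * δ ≤ (d:ℝ) := by
          have := hdlow
          linarith [mul_comm δ lg]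
        rw [show lg*(d:ℝ)⁻¹ = lg/(d:ℝ) from by ring, div_le_div_iff₀ hdR0 hδ]
        have hlg0 : (0:ℝ) ≤ lg := by linarith
        calc lg * δ ≤ (d:ℝ) := hlgd
          _ = 1*(d:ℝ) := (one_mul _).symm
      have hP1 : (1:ℝ) ≤ (2:ℝ)^(1/δ) := by
        calc (1:ℝ) = (2:ℝ)^(0:ℝ) := (Real.rpow_zero 2).symm
          _ ≤ (2:ℝ)^(1/δ) := Real.rpow_le_rpow_of_exponent_le (by norm_num) hδinv
      linarith
    have hlogle : ((Nat.log 2 n : ℕ) : ℝ) ≤ lg := by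
      have h1' : (2:ℕ)^(Nat.log 2 n) ≤ n := Nat.pow_log_le_self 2 (by omega)
      have h2' : ((2:ℕ)^(Nat.log 2 n) : ℝ) ≤ (n:ℝ) := by exact_mod_cast h1'
      have h3' : (2:ℝ)^((Nat.log 2 n : ℕ):ℝ) ≤ (2:ℝ)^lg := by
        rw [Real.rpow_natCast]
        rw [hnlg] at h2'
        calc (2:ℝ)^(Nat.log 2 n : ℕ) = ((2:ℕ)^(Nat.log 2 n) : ℝ) := by push_cast; ring
          _ ≤ (2:ℝ)^lg := h2'
      exact (Real.rpow_le_rpow_left_iff (by norm_num)).mp h3'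
    have h3 : ((m + Mv : ℕ) : ℝ) ≤ 64 * (2:ℝ)^(1/δ) * D := by
      have harith := PSS.upper_arith (r:ℝ) (d:ℝ) (K:ℝ) ((Nat.log 2 n : ℕ):ℝ)
        δ lg ((n:ℝ)^ε) ((2:ℝ)^(1/δ)) hδ hlg1 hnε1 hδlg
        (by positivity) (by positivity) (by positivity) (by positivity)
        hrup hdup hKup hlogle rfl
      have ecast : ((m + Mv : ℕ) : ℝ)
          = 2*((r:ℝ)*(d:ℝ))*(K:ℝ) + ((r:ℝ)*(((Nat.log 2 n : ℕ):ℝ)+1)+1) := by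
        rw [hmdef, hMvdef]
        push_cast
        ring
      rw [ecast, hDdef]
      calc 2*((r:ℝ)*(d:ℝ))*(K:ℝ) + ((r:ℝ)*(((Nat.log 2 n : ℕ):ℝ)+1)+1)
          ≤ 64*(2:ℝ)^(1/δ)*(δ*((n:ℝ)^ε)*lg) := harith
        _ = 64*(2:ℝ)^(1/δ)*(δ*(n:ℝ)^ε*lg) := by ring
    calc sInf {L : ℝ | ∃ c : AdaptiveLDC r d n, expLenA c = L}
        ≤ expLenA c₀ := h1
      _ ≤ ((m + Mv : ℕ) : ℝ) := h2
      _ ≤ 64 * (2:ℝ)^(1/δ) * D := h3
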